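/- Let X be a graph and R a positive integer. Any 1-chain c ∈ C_1^R(X) can be written as c = b + c' where c' ∈ C_1^1(X), b = ∂a for some 2-chain a ∈ C_2^R(X), with ‖c'‖₁ ≤ R·‖c‖₁ and ‖a‖₁ ≤ (R+1)·‖c‖₁. Moreover, if c has integer coefficients, then b, c', and a can be taken with integer coefficients. -/

import Mathlib

open Finsupp

variable {V : Type*}

/-- 0-chains. -/
abbrev C0 (V : Type*) := V →₀ ℝ
/-- 1-chains: free real vector space on ordered pairs of vertices. -/
abbrev C1 (V : Type*) := (V × V) →₀ ℝ
/-- 2-chains: free real vector space on ordered triples of vertices. -/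
abbrev C2 (V : Type*) := (V × V × V) →₀ ℝ
/-- 3-chains. -/
abbrev C3 (V : Type*) := (V × V × V × V) →₀ ℝ

/-- ℓ¹-norm of a finitely supported chain. -/
noncomputable def l1 {α : Type*} (c : α →₀ ℝ) : ℝ := c.support.sum fun t => |c t|

/-- Boundary map ∂ : C₂ → C₁, (x₀,x₁,x₂) ↦ (x₁,x₂) − (x₀,x₂) + (x₀,x₁). -/
noncomputable def bdry2 : C2 V →ₗ[ℝ] C1 V :=
  Finsupp.lsum ℝ fun t => LinearMap.toSpanSingleton ℝ (C1 V)
    (single (t.2.1, t.2.2) 1 - single (t.1, t.2.2) 1 + single (t.1, t.2.1) 1)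

/-- Boundary map ∂ : C₁ → C₀, (x₀,x₁) ↦ x₁ − x₀. -/
noncomputable def bdry1 : C1 V →ₗ[ℝ] C0 V :=
  Finsupp.lsum ℝ fun t => LinearMap.toSpanSingleton ℝ (C0 V)
    (single t.2 1 - single t.1 1)

/-- Boundary map ∂ : C₃ → C₂. -/
noncomputable def bdry3 : C3 V →ₗ[ℝ] C2 V :=
  Finsupp.lsum ℝ fun t => LinearMap.toSpanSingleton ℝ (C2 V)
    (single (t.2.1, t.2.2.1, t.2.2.2) 1 - single (t.1, t.2.2.1, t.2.2.2) 1
      + single (t.1, t.2.1, t.2.2.2) 1 - single (t.1, t.2.1, t.2.2.1) 1)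

/-- Two vertices are at (finite) distance at most R. -/
def pairOK (G : SimpleGraph V) (R : ℕ) (a b : V) : Prop :=
  G.Reachable a b ∧ G.dist a b ≤ R

/-- Membership in C₁^R : supported on pairs at distance ≤ R. -/
def memC1R (G : SimpleGraph V) (R : ℕ) (c : C1 V) : Prop :=
  ∀ t ∈ c.support, pairOK G R t.1 t.2

/-- Membership in C₂^R : supported on triples of diameter ≤ R. -/
def memC2R (G : SimpleGraph V) (R : ℕ) (c : C2 V) : Prop :=
  ∀ t ∈ c.support, pairOK G R t.1 t.2.1 ∧ pairOK G R t.1 t.2.2 ∧ pairOK G R t.2.1 t.2.2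

/-- Membership in B₁^R = ∂C₂^R. -/
def memB1R (G : SimpleGraph V) (R : ℕ) (b : C1 V) : Prop :=
  ∃ a : C2 V, memC2R G R a ∧ bdry2 a = b

/-- The filling norm ‖b‖_F^R = inf of ℓ¹-norms of fillings in C₂^R. -/
noncomputable def fillNorm (G : SimpleGraph V) (R : ℕ) (b : C1 V) : ℝ :=
  sInf {r | ∃ a : C2 V, memC2R G R a ∧ bdry2 a = b ∧ r = l1 a}

/-- The 1-chain c(p) associated to a walk p. -/
noncomputable def walkChain (G : SimpleGraph V) {x y : V} (p : G.Walk x y) : C1 V :=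
  (p.darts.map fun d => single d.toProd (1 : ℝ)).sum

/-- A walk is geodesic if its length realizes the distance of its endpoints. -/
def IsGeodesicWalk (G : SimpleGraph V) {x y : V} (p : G.Walk x y) : Prop :=
  p.length = G.dist x y

/-- Geodesic triangles of G are n-slim. -/
def SlimTriangles (G : SimpleGraph V) (n : ℕ) : Prop :=
  ∀ (x y z : V) (p : G.Walk x y) (q : G.Walk y z) (r : G.Walk x z),
    IsGeodesicWalk G p → IsGeodesicWalk G q → IsGeodesicWalk G r →
    (∀ v ∈ p.support, ∃ w, (w ∈ q.support ∨ w ∈ r.support) ∧ G.dist v w ≤ n) ∧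
    (∀ v ∈ q.support, ∃ w, (w ∈ p.support ∨ w ∈ r.support) ∧ G.dist v w ≤ n) ∧
    (∀ v ∈ r.support, ∃ w, (w ∈ p.support ∨ w ∈ q.support) ∧ G.dist v w ≤ n)

/-- A real chain has integer coefficients. -/
def IntCoeffs {α : Type*} (c : α →₀ ℝ) : Prop := ∀ t, ∃ n : ℤ, c t = n

/-- X has a finite homological isoperimetric function with parameters R₀, θ :
for every closed path p, c(p) ∈ B₁^{R₀} and ‖c(p)‖_F^{R₀} ≤ θ(length p). -/
def FinHomIsop (G : SimpleGraph V) (R₀ : ℕ) (θ : ℕ → ℝ) : Prop :=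
  ∀ (x : V) (p : G.Walk x x), memB1R G R₀ (walkChain G p) ∧
    fillNorm G R₀ (walkChain G p) ≤ θ p.length

/-- A 2-cochain is bounded on each C₂^R. -/
def Bdd2 {W : Type*} [NormedAddCommGroup W] [NormedSpace ℝ W]
    (G : SimpleGraph V) (f : C2 V →ₗ[ℝ] W) : Prop :=
  ∀ R : ℕ, ∃ M : ℝ, ∀ c : C2 V, memC2R G R c → ‖f c‖ ≤ M * l1 c

/-- A 1-cochain is bounded on each C₁^R. -/
def Bdd1 {W : Type*} [NormedAddCommGroup W] [NormedSpace ℝ W]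
    (G : SimpleGraph V) (f : C1 V →ₗ[ℝ] W) : Prop :=
  ∀ R : ℕ, ∃ M : ℝ, ∀ c : C1 V, memC1R G R c → ‖f c‖ ≤ M * l1 c

/-- A Banach space is 1-injective: bounded linear maps into it extend from
subspaces of normed spaces with the same norm. -/
def IsOneInjective (W : Type*) [NormedAddCommGroup W] [NormedSpace ℝ W] : Prop :=
  ∀ (E : Type) [NormedAddCommGroup E] [NormedSpace ℝ E],
    ∀ (p : Subspace ℝ E) (φ : p →L[ℝ] W),
      ∃ ψ : E →L[ℝ] W, (∀ x : p, ψ x = φ x) ∧ ‖ψ‖ ≤ ‖φ‖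

-- l1 lemmas
lemma l1_eq_sum {α : Type*} (c : α →₀ ℝ) {s : Finset α} (h : c.support ⊆ s) :
    l1 c = s.sum fun t => |c t| := by
  refine Finset.sum_subset h fun t _ ht => ?_
  rw [Finsupp.notMem_support_iff.mp ht, abs_zero]

lemma l1_zero {α : Type*} : l1 (0 : α →₀ ℝ) = 0 := by simp [l1]

lemma l1_add_le {α : Type*} (x y : α →₀ ℝ) : l1 (x + y) ≤ l1 x + l1 y := by
  classical
  rw [l1_eq_sum (x + y) Finsupp.support_add,
    l1_eq_sum x Finset.subset_union_left, l1_eq_sum y Finset.subset_union_right,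
    ← Finset.sum_add_distrib]
  exact Finset.sum_le_sum fun t _ => by simpa using abs_add_le (x t) (y t)

lemma l1_neg {α : Type*} (x : α →₀ ℝ) : l1 (-x) = l1 x := by
  simp [l1, Finsupp.support_neg]

lemma l1_sub_le {α : Type*} (x y : α →₀ ℝ) : l1 (x - y) ≤ l1 x + l1 y := by
  rw [sub_eq_add_neg]; simpa [l1_neg] using l1_add_le x (-y)

lemma l1_smul {α : Type*} (r : ℝ) (x : α →₀ ℝ) : l1 (r • x) = |r| * l1 x := by
  rw [l1_eq_sum (r • x) Finsupp.support_smul, l1, Finset.mul_sum]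
  exact Finset.sum_congr rfl fun t _ => by simp [abs_mul]

lemma l1_single {α : Type*} (t : α) (r : ℝ) : l1 (single t r) = |r| := by
  rw [l1_eq_sum (single t r) Finsupp.support_single_subset]
  simp

lemma l1_listsum_le {α β : Type*} (l : List β) (g : β → α) :
    l1 ((l.map fun d => single (g d) (1 : ℝ)).sum) ≤ l.length := by
  induction l with
  | nil => simp [l1_zero]
  | cons d l ih =>
    simp only [List.map_cons, List.sum_cons, List.length_cons]
    calc l1 _ ≤ l1 (single (g d) (1:ℝ)) + l1 ((l.map fun d => single (g d) (1:ℝ)).sum) :=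
          l1_add_le _ _
      _ ≤ 1 + l.length := by rw [l1_single]; simp [ih]
      _ = (l.length + 1 : ℕ) := by push_cast; ring

lemma l1_finset_sum_le {α β : Type*} (s : Finset β) (f : β → (α →₀ ℝ)) :
    l1 (∑ b ∈ s, f b) ≤ ∑ b ∈ s, l1 (f b) := by
  classical
  induction s using Finset.induction_on with
  | empty => simp [l1_zero]
  | insert _ _ h ih =>
    rw [Finset.sum_insert h, Finset.sum_insert h]
    exact le_trans (l1_add_le _ _) (by linarith)

-- support of list sum of singles
lemma support_listsum {α β : Type*} (l : List β) (g : β → α) :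
    ∀ s ∈ ((l.map fun d => single (g d) (1 : ℝ)).sum).support, ∃ d ∈ l, s = g d := by
  classical
  induction l with
  | nil => simp
  | cons d l ih =>
    intro s hs
    simp only [List.map_cons, List.sum_cons] at hs
    rcases Finset.mem_union.mp (Finsupp.support_add hs) with h | h
    · exact ⟨d, by simp, by simpa using Finsupp.support_single_subset h⟩
    · obtain ⟨d', hd', rfl⟩ := ih s h
      exact ⟨d', by simp [hd'], rfl⟩

lemma intval_listsum {α β : Type*} (l : List β) (g : β → α) (s : α) :
    ∃ n : ℤ, ((l.map fun d => single (g d) (1 : ℝ)).sum) s = n := by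
  induction l with
  | nil => exact ⟨0, by simp⟩
  | cons d l ih =>
    obtain ⟨n, hn⟩ := ih
    simp only [List.map_cons, List.sum_cons, Finsupp.add_apply, hn]
    by_cases h : g d = s
    · exact ⟨1 + n, by simp [Finsupp.single_apply, h]⟩
    · exact ⟨n, by simp [Finsupp.single_apply, h]⟩

lemma bdry2_single (t : V × V × V) (r : ℝ) :
    bdry2 (single t r) =
      r • (single (t.2.1, t.2.2) 1 - single (t.1, t.2.2) 1 + single (t.1, t.2.1) (1:ℝ)) := by
  simp [bdry2, LinearMap.toSpanSingleton_apply]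

noncomputable def triChain (G : SimpleGraph V) (x : V) {u v : V} (p : G.Walk u v) : C2 V :=
  (p.darts.map fun d => single (x, d.toProd) (1 : ℝ)).sum

lemma bdry2_triChain (G : SimpleGraph V) (x : V) {u v : V} (p : G.Walk u v) :
    bdry2 (triChain G x p) = walkChain G p - single (x, v) 1 + single (x, u) 1 := by
  induction p with
  | nil => simp [triChain, walkChain]
  | cons h q ih =>
    simp only [triChain, walkChain, SimpleGraph.Walk.darts_cons, List.map_cons, List.sum_cons] at *
    rw [map_add, bdry2_single, ih]
    simp only [one_smul]
    abel

lemma bdry2_decomp (G : SimpleGraph V) (x y : V) (p : G.Walk x y) :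
    bdry2 (single (x, x, x) 1 - triChain G x p) + walkChain G p = single (x, y) (1:ℝ) := by
  rw [map_sub, bdry2_triChain, bdry2_single]
  simp only [one_smul]
  abel

lemma dist_le_of_mem_support {G : SimpleGraph V} {x y v : V} (p : G.Walk x y)
    (hv : v ∈ p.support) : G.dist x v ≤ p.length := by
  classical
  exact le_trans (SimpleGraph.dist_le (p.takeUntil v hv))
    (SimpleGraph.Walk.length_takeUntil_le p hv)

lemma int_finset_sum {β : Type*} (s : Finset β) (f : β → ℝ)
    (h : ∀ b ∈ s, ∃ n : ℤ, f b = n) : ∃ n : ℤ, ∑ b ∈ s, f b = n := by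
  classical
  induction s using Finset.induction_on with
  | empty => exact ⟨0, by simp⟩
  | @insert b s hb ih =>
    obtain ⟨n, hn⟩ := h b (by simp)
    obtain ⟨m, hm⟩ := ih fun b hb => h b (by simp [hb])
    exact ⟨n + m, by rw [Finset.sum_insert hb, hn, hm]; push_cast; ring⟩


/-- any c ∈ C₁^R(X) can be written as c = ∂a + c' with c' ∈ C₁¹,
a ∈ C₂^R, ‖c'‖₁ ≤ R‖c‖₁, ‖a‖₁ ≤ (R+1)‖c‖₁; integrally if c is integral. -/
theorem chain_R_to_one (G : SimpleGraph V) (hconn : G.Connected)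
    (R : ℕ) (hR : 1 ≤ R) (c : C1 V) (hc : memC1R G R c) :
    ∃ (a : C2 V) (c' : C1 V),
      memC2R G R a ∧ memC1R G 1 c' ∧ c = bdry2 a + c' ∧
      l1 c' ≤ (R : ℝ) * l1 c ∧ l1 a ≤ ((R : ℝ) + 1) * l1 c ∧
      (IntCoeffs c → IntCoeffs a ∧ IntCoeffs c') := by
  classical
  choose geo hgeo using fun t : V × V => hconn.exists_walk_length_eq_dist t.1 t.2
  have hlen : ∀ t ∈ c.support, (geo t).length ≤ R := fun t ht => by
    rw [hgeo t]; exact (hc t ht).2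
  set A : V × V → C2 V := fun t => single (t.1, t.1, t.1) 1 - triChain G t.1 (geo t) with hA
  set a : C2 V := ∑ t ∈ c.support, c t • A t with ha
  set c' : C1 V := ∑ t ∈ c.support, c t • walkChain G (geo t) with hc'
  refine ⟨a, c', ?_, ?_, ?_, ?_, ?_, ?_⟩
  · -- memC2R
    intro s hs
    obtain ⟨t, ht, hst⟩ := Finset.mem_biUnion.mp (Finsupp.support_finset_sum hs)
    have hst' : s ∈ (A t).support := Finsupp.support_smul hst
    have hlt := hlen t ht
    rcases Finset.mem_union.mp (Finsupp.support_sub hst') with h | h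
    · have : s = (t.1, t.1, t.1) := by simpa using Finsupp.support_single_subset h
      subst this
      exact ⟨⟨SimpleGraph.Reachable.refl _, by simp [SimpleGraph.dist_self]⟩, ⟨SimpleGraph.Reachable.refl _, by simp [SimpleGraph.dist_self]⟩,
        ⟨SimpleGraph.Reachable.refl _, by simp [SimpleGraph.dist_self]⟩⟩
    · obtain ⟨d, hd, rfl⟩ := support_listsum (geo t).darts (fun d => (t.1, d.toProd)) s h
      have h1 : G.dist t.1 d.toProd.1 ≤ R :=
        le_trans (dist_le_of_mem_support (geo t)
          (SimpleGraph.Walk.dart_fst_mem_support_of_mem_darts _ hd)) hlt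
      have h2 : G.dist t.1 d.toProd.2 ≤ R :=
        le_trans (dist_le_of_mem_support (geo t)
          (SimpleGraph.Walk.dart_snd_mem_support_of_mem_darts _ hd)) hlt
      have h3 : G.dist d.toProd.1 d.toProd.2 ≤ R := by
        refine le_trans (le_trans (SimpleGraph.dist_le d.adj.toWalk) ?_) hR
        simp [SimpleGraph.Adj.toWalk]
      exact ⟨⟨hconn _ _, h1⟩, ⟨hconn _ _, h2⟩, ⟨hconn _ _, h3⟩⟩
  · -- memC1R
    intro s hs
    obtain ⟨t, ht, hst⟩ := Finset.mem_biUnion.mp (Finsupp.support_finset_sum hs)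
    have hst' : s ∈ (walkChain G (geo t)).support := Finsupp.support_smul hst
    obtain ⟨d, hd, rfl⟩ := support_listsum (geo t).darts (fun d => d.toProd) s hst'
    refine ⟨d.adj.reachable, ?_⟩
    refine le_trans (SimpleGraph.dist_le d.adj.toWalk) ?_
    simp [SimpleGraph.Adj.toWalk]
  · -- decomposition
    rw [ha, map_sum, ← Finset.sum_add_distrib]
    have : ∀ t ∈ c.support, bdry2 (c t • A t) + c t • walkChain G (geo t) = single t (c t) := by
      intro t ht
      rw [map_smul, ← smul_add, hA]
      rw [bdry2_decomp G t.1 t.2 (geo t)]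
      rw [Finsupp.smul_single]
      simp
    rw [Finset.sum_congr rfl this]
    exact (Finsupp.sum_single c).symm
  · -- l1 c'
    calc l1 c' ≤ ∑ t ∈ c.support, l1 (c t • walkChain G (geo t)) := l1_finset_sum_le _ _
      _ ≤ ∑ t ∈ c.support, |c t| * R := by
          refine Finset.sum_le_sum fun t ht => ?_
          rw [l1_smul]
          refine mul_le_mul_of_nonneg_left ?_ (abs_nonneg _)
          refine le_trans (l1_listsum_le _ _) ?_
          rw [SimpleGraph.Walk.length_darts]
          exact_mod_cast hlen t ht
      _ = (R : ℝ) * l1 c := by rw [l1, Finset.mul_sum]; exact Finset.sum_congr rfl fun t _ => mul_comm _ _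
  · -- l1 a
    calc l1 a ≤ ∑ t ∈ c.support, l1 (c t • A t) := l1_finset_sum_le _ _
      _ ≤ ∑ t ∈ c.support, |c t| * ((R : ℝ) + 1) := by
          refine Finset.sum_le_sum fun t ht => ?_
          rw [l1_smul]
          refine mul_le_mul_of_nonneg_left ?_ (abs_nonneg _)
          rw [hA]
          refine le_trans (l1_sub_le _ _) ?_
          rw [l1_single, abs_one]
          have := le_trans (l1_listsum_le (geo t).darts (fun d => (t.1, d.toProd))) (by
            rw [SimpleGraph.Walk.length_darts]
            exact_mod_cast hlen t ht : ((geo t).darts.length : ℝ) ≤ R)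
          unfold triChain
          linarith
      _ = ((R : ℝ) + 1) * l1 c := by rw [l1, Finset.mul_sum]; exact Finset.sum_congr rfl fun t _ => mul_comm _ _
  · -- integrality
    intro hint
    have hintA : ∀ t s, ∃ n : ℤ, A t s = n := by
      intro t s
      obtain ⟨n, hn⟩ := intval_listsum (geo t).darts (fun d => (t.1, d.toProd)) s
      rw [hA]
      simp only [Finsupp.sub_apply]
      unfold triChain
      rw [hn]
      by_cases h : (t.1, t.1, t.1) = s
      · exact ⟨1 - n, by rw [Finsupp.single_apply, if_pos h]; push_cast; ring⟩
      · exact ⟨-n, by rw [Finsupp.single_apply, if_neg h]; push_cast; ring⟩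
    constructor
    · intro s
      rw [ha, Finsupp.finset_sum_apply]
      refine int_finset_sum _ _ fun t ht => ?_
      obtain ⟨m, hm⟩ := hint t
      obtain ⟨n, hn⟩ := hintA t s
      exact ⟨m * n, by rw [Finsupp.smul_apply, smul_eq_mul, hm, hn]; push_cast; ring⟩
    · intro s
      rw [hc', Finsupp.finset_sum_apply]
      refine int_finset_sum _ _ fun t ht => ?_
      obtain ⟨m, hm⟩ := hint t
      obtain ⟨n, hn⟩ := intval_listsum (geo t).darts (fun d => d.toProd) s
      exact ⟨m * n, by rw [Finsupp.smul_apply, smul_eq_mul, hm]; unfold walkChain; rw [hn]; push_cast; ring⟩
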